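/- Let λ ∈ ℂ∖{0}, n ≥ 1, and x = (x₁,…,x_n) ∈ ℂⁿ with x₁ ≠ 0. Let Toep_n(x) be the upper triangular Toeplitz matrix with (i,j) entry equal to x_{j−i+1} for i ≤ j and 0 for i > j, and let Ω(λ,n) be the n×n matrix with entries: 0 below the diagonal; 0 in column n except the (n,n) entry which is 1; diagonal entry (−1)^{n−i} λ^{−2(n−i)} at position (i,i); and (−1)^{n−i} C(n−i−1, j−i) λ^{−2n+i+j} at position (i,j) for i < j, j ≠ n. Set g = Toep_n(x)·Ω(λ,n), with entries g_{i,j}. Then: (a) g_{i,j} = 0 for i > j; (b) g_{i,n} = x_{n−i+1} for all 1 ≤ i ≤ n; (c) g_{i,j} = −λ⁻² g_{i+1,j+1} − λ⁻¹ g_{i+1,j} for all 1 ≤ i ≤ j ≤ n−1; and (d) g·J(λ⁻¹,n) = (J(λ,n))⁻¹·g. -/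

import Mathlib

/-- The Jordan block `J(λ, m)`. -/
noncomputable def jordanBlock (lam : ℂ) (m : ℕ) : Matrix (Fin m) (Fin m) ℂ :=
  Matrix.of fun i j => if (j : ℕ) = (i : ℕ) then lam
    else if (j : ℕ) = (i : ℕ) + 1 then 1 else 0

/-- The matrix `Ω(λ, n)` (indices `1, …, n` in the paper correspond to `0, …, n-1` here). -/
noncomputable def Omega (lam : ℂ) (n : ℕ) : Matrix (Fin n) (Fin n) ℂ :=
  Matrix.of fun i j =>
    if (j : ℕ) < (i : ℕ) then 0
    else if i = j then (-1 : ℂ) ^ (n - 1 - (i : ℕ)) * lam ^ (-(2 * ((n : ℤ) - 1 - (i : ℕ))))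
    else if (j : ℕ) = n - 1 then 0
    else (-1 : ℂ) ^ (n - 1 - (i : ℕ)) * ((n - 2 - (i : ℕ)).choose ((j : ℕ) - (i : ℕ))) *
      lam ^ ((i : ℤ) + (j : ℕ) + 2 - 2 * n)

/-- The upper triangular Toeplitz matrix with `(i,j)` entry `x_{j-i+1}` (1-based), i.e.
`x (j - i)` in 0-based indexing, for `i ≤ j`, and `0` for `i > j`. -/
noncomputable def toep {n : ℕ} (x : Fin n → ℂ) : Matrix (Fin n) (Fin n) ℂ :=
  Matrix.of fun i j =>
    if (i : ℕ) ≤ (j : ℕ) then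
      x ⟨(j : ℕ) - (i : ℕ), lt_of_le_of_lt (Nat.sub_le _ _) j.isLt⟩ else 0

noncomputable def Wfun (lam : ℂ) (n : ℕ) (i j : ℕ) : ℂ :=
  if j < i then 0
  else if i = j then (-1 : ℂ) ^ (n - 1 - i) * lam ^ (-(2 * ((n : ℤ) - 1 - i)))
  else if j = n - 1 then 0
  else (-1 : ℂ) ^ (n - 1 - i) * ((n - 2 - i).choose (j - i)) *
    lam ^ ((i : ℤ) + j + 2 - 2 * n)

noncomputable def Tfun {n : ℕ} (x : Fin n → ℂ) (i k : ℕ) : ℂ :=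
  if h : i ≤ k ∧ k < n then x ⟨k - i, by omega⟩ else 0

lemma Omega_eq (lam : ℂ) (n : ℕ) (i j : Fin n) :
    Omega lam n i j = Wfun lam n i j := by
  unfold Omega Wfun
  simp only [Matrix.of_apply, Fin.ext_iff]

lemma toep_eq {n : ℕ} (x : Fin n → ℂ) (i j : Fin n) :
    toep x i j = Tfun x i j := by
  unfold toep Tfun
  simp only [Matrix.of_apply]
  split_ifs with h1 h2 h2 <;> first | rfl | omega

lemma Wfun_below {lam : ℂ} {n i j : ℕ} (h : j < i) : Wfun lam n i j = 0 := by
  rw [Wfun, if_pos h]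

lemma Wfun_diag {lam : ℂ} {n : ℕ} (i : ℕ) :
    Wfun lam n i i = (-1 : ℂ) ^ (n - 1 - i) * lam ^ (-(2 * ((n : ℤ) - 1 - i))) := by
  rw [Wfun, if_neg (lt_irrefl i), if_pos rfl]

lemma Wfun_last {lam : ℂ} {n i j : ℕ} (h : i < j) (h2 : j = n - 1) :
    Wfun lam n i j = 0 := by
  rw [Wfun, if_neg (by omega), if_neg (by omega), if_pos h2]

lemma Wfun_off {lam : ℂ} {n i j : ℕ} (h : i < j) (h2 : j ≠ n - 1) :
    Wfun lam n i j = (-1 : ℂ) ^ (n - 1 - i) * ((n - 2 - i).choose (j - i)) *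
      lam ^ ((i : ℤ) + j + 2 - 2 * n) := by
  rw [Wfun, if_neg (by omega), if_neg (by omega), if_neg h2]

lemma Wfun_rec {n : ℕ} (lam : ℂ) (hlam : lam ≠ 0) (m j : ℕ)
    (hm : m < n - 1) (hj : j < n - 1) :
    Wfun lam n m j =
      -(lam ^ (-2 : ℤ)) * Wfun lam n (m + 1) (j + 1) - lam⁻¹ * Wfun lam n (m + 1) j := by
  have hl2 : lam⁻¹ = lam ^ (-1 : ℤ) := by rw [zpow_neg_one]
  rcases lt_trichotomy j m with h | h | h
  · rw [Wfun_below h, Wfun_below (by omega), Wfun_below (by omega)]; ring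
  · subst h
    rw [Wfun_diag, Wfun_diag, Wfun_below (by omega)]
    rw [show n - 1 - j = (n - 1 - (j+1)) + 1 by omega, pow_succ]
    rw [show (-(2 * ((n : ℤ) - 1 - (j : ℕ)))) = (-2) + (-(2 * ((n : ℤ) - 1 - ((j+1 : ℕ) : ℕ)))) by push_cast; ring,
      zpow_add₀ hlam]
    ring
  · by_cases h3 : j = n - 2
    · by_cases h4 : m + 1 = j
      · -- case A
        rw [Wfun_off h (by omega), Wfun_last (by omega) (by omega), h4, Wfun_diag]
        rw [show n - 1 - m = (n - 1 - j) + 1 by omega, pow_succ,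
          show n - 2 - m = 1 by omega, show j - m = 1 by omega]
        rw [show ((m : ℤ) + (j:ℕ) + 2 - 2 * n) = (-1) + (-(2 * ((n : ℤ) - 1 - (j : ℕ)))) by
          push_cast; omega, zpow_add₀ hlam, hl2]
        simp [Nat.choose]
        ring
      · -- case B
        rw [Wfun_off h (by omega), Wfun_last (by omega) (by omega),
          Wfun_off (by omega) (by omega)]
        rw [show n - 1 - m = (n - 1 - (m+1)) + 1 by omega, pow_succ,
          show (n - 2 - m).choose (j - m) = 1 by
            rw [show j - m = n - 2 - m by omega, Nat.choose_self],
          show (n - 2 - (m+1)).choose (j - (m+1)) = 1 by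
            rw [show j - (m+1) = n - 2 - (m+1) by omega, Nat.choose_self]]
        rw [show ((m : ℤ) + (j:ℕ) + 2 - 2 * n) = (-1) + (((m+1:ℕ) : ℤ) + (j:ℕ) + 2 - 2*n) by
          push_cast; ring, zpow_add₀ hlam, hl2]
        ring
    · by_cases h4 : m + 1 = j
      · -- case C
        subst h4
        have h2two : lam ^ (2:ℤ) = lam * lam := by
          rw [show (2:ℤ) = ((2:ℕ):ℤ) by norm_num, zpow_natCast]; ring
        have hneg2 : lam ^ (-2:ℤ) = (lam*lam)⁻¹ := by
          rw [show (-2:ℤ) = -(2:ℤ) by ring, zpow_neg, h2two]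
        rw [Wfun_off (by omega) (by omega), Wfun_off (by omega) (by omega), Wfun_diag]
        rw [show (m+1)-m = 1 by omega, show (m+1+1)-(m+1) = 1 by omega,
          Nat.choose_one_right, Nat.choose_one_right]
        rw [show n-1-m = (n-1-(m+1))+1 by omega, pow_succ]
        rw [show n-2-m = (n-2-(m+1))+1 by omega]
        rw [show ((m+1:ℕ):ℤ)+(((m+1)+1:ℕ):ℤ)+2-2*(n:ℤ) = 2 + ((m:ℤ)+((m+1:ℕ):ℤ)+2-2*n) by
          push_cast; ring, zpow_add₀ hlam]
        rw [show -(2*((n:ℤ)-1-((m+1:ℕ):ℕ))) = 1 + ((m:ℤ)+((m+1:ℕ):ℤ)+2-2*(n:ℤ)) by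
          push_cast; ring, zpow_add₀ hlam]
        push_cast
        rw [h2two, hneg2, zpow_one]
        field_simp
        ring
      · -- case D (Pascal)
        have h2two : lam ^ (2:ℤ) = lam * lam := by
          rw [show (2:ℤ) = ((2:ℕ):ℤ) by norm_num, zpow_natCast]; ring
        have hneg2 : lam ^ (-2:ℤ) = (lam*lam)⁻¹ := by
          rw [show (-2:ℤ) = -(2:ℤ) by ring, zpow_neg, h2two]
        rw [Wfun_off h (by omega), Wfun_off (by omega) (by omega),
          Wfun_off (by omega) (by omega)]
        rw [show n-1-m = (n-1-(m+1))+1 by omega, pow_succ]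
        rw [show j+1-(m+1) = (j-(m+1))+1 by omega, show j-m = (j-(m+1))+1 by omega,
          show n-2-m = (n-2-(m+1))+1 by omega, Nat.choose_succ_succ, Nat.succ_eq_add_one]
        rw [show ((m+1:ℕ):ℤ)+((j+1:ℕ):ℤ)+2-2*(n:ℤ) = 2 + ((m:ℤ)+(j:ℕ)+2-2*n) by
          push_cast; ring, zpow_add₀ hlam]
        rw [show ((m+1:ℕ):ℤ)+((j:ℕ):ℤ)+2-2*(n:ℤ) = 1 + ((m:ℤ)+(j:ℕ)+2-2*n) by
          push_cast; ring, zpow_add₀ hlam]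
        push_cast
        rw [h2two, hneg2, zpow_one]
        field_simp
        ring

lemma g_entry {n : ℕ} (lam : ℂ) (x : Fin n → ℂ) (i j : Fin n) :
    (toep x * Omega lam n) i j = ∑ k ∈ Finset.range n, Tfun x (i : ℕ) k * Wfun lam n k (j : ℕ) := by
  rw [Matrix.mul_apply, ← Fin.sum_univ_eq_sum_range (fun k => Tfun x (i : ℕ) k * Wfun lam n k (j : ℕ)) n]
  exact Finset.sum_congr rfl fun k _ => by rw [toep_eq, Omega_eq]

section main
variable {n : ℕ} (hn : 1 ≤ n) (lam : ℂ) (hlam : lam ≠ 0) (x : Fin n → ℂ)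

lemma part_a (i j : Fin n) (h : (j : ℕ) < (i : ℕ)) : (toep x * Omega lam n) i j = 0 := by
  rw [g_entry]
  refine Finset.sum_eq_zero fun k hk => ?_
  by_cases hik : (i : ℕ) ≤ k
  · rw [Wfun_below (by omega), mul_zero]
  · rw [Tfun, dif_neg (by omega), zero_mul]

lemma part_b (i : Fin n) (hn : 1 ≤ n) :
    (toep x * Omega lam n) i ⟨n - 1, Nat.sub_lt hn Nat.one_pos⟩ =
      x ⟨n - 1 - (i : ℕ), lt_of_le_of_lt (Nat.sub_le _ _) (Nat.sub_lt hn Nat.one_pos)⟩ := by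
  rw [g_entry]
  rw [Finset.sum_eq_single (n - 1)]
  · rw [Tfun, dif_pos ⟨by omega, by omega⟩, Wfun_diag]
    rw [show (n : ℤ) - 1 - ((n - 1 : ℕ) : ℕ) = 0 by push_cast; omega]
    norm_num
  · intro k hk hne
    simp only [Finset.mem_range] at hk
    rw [Wfun_last (by omega) rfl, mul_zero]
  · intro h
    exact absurd (Finset.mem_range.mpr (by omega)) h

lemma part_c (hlam : lam ≠ 0) (i j : ℕ) (hij : i ≤ j) (hj : j < n - 1) :
    (toep x * Omega lam n) ⟨i, lt_of_le_of_lt hij (lt_of_lt_of_le hj (Nat.sub_le n 1))⟩ ⟨j, hj.trans (Nat.sub_lt hn Nat.one_pos)⟩ =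
      -(lam ^ (-2 : ℤ)) * (toep x * Omega lam n) ⟨i + 1, lt_of_le_of_lt (Nat.succ_le_succ hij) (Nat.add_lt_of_lt_sub hj)⟩ ⟨j + 1, Nat.add_lt_of_lt_sub hj⟩
        - lam⁻¹ * (toep x * Omega lam n) ⟨i + 1, lt_of_le_of_lt (Nat.succ_le_succ hij) (Nat.add_lt_of_lt_sub hj)⟩ ⟨j, hj.trans (Nat.sub_lt hn Nat.one_pos)⟩ := by
  rw [g_entry, g_entry, g_entry]
  simp only
  obtain ⟨m, hm⟩ : ∃ m, n = m + 1 := ⟨n - 1, by omega⟩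
  subst hm
  rw [Finset.sum_range_succ, Wfun_below (show j < m by omega), mul_zero, add_zero,
    Finset.sum_range_succ', Finset.sum_range_succ']
  rw [show Tfun x (i+1) 0 = 0 by rw [Tfun, dif_neg (by omega)], zero_mul, zero_mul,
    add_zero, add_zero, Finset.mul_sum, Finset.mul_sum, ← Finset.sum_sub_distrib]
  refine Finset.sum_congr rfl fun k hk => ?_
  simp only [Finset.mem_range] at hk
  have hT : Tfun x (i+1) (k+1) = Tfun x i k := by
    unfold Tfun
    split_ifs with h1 h2 h2
    · congr 1
      exact Fin.mk_eq_mk.mpr (by omega)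
    · omega
    · omega
    · rfl
  rw [hT, Wfun_rec lam hlam k j (by omega) (by omega)]
  ring

end main

lemma sum_indicator {n : ℕ} (c : ℕ) (f : Fin n → ℂ) :
    (∑ k : Fin n, if (k : ℕ) = c then f k else 0) = if h : c < n then f ⟨c, h⟩ else 0 := by
  by_cases h : c < n
  · rw [dif_pos h, show f ⟨c, h⟩ = if (⟨c, h⟩ : Fin n) ∈ Finset.univ then f ⟨c, h⟩ else 0 by simp,
      ← Finset.sum_ite_eq' Finset.univ (⟨c, h⟩ : Fin n) f]
    exact Finset.sum_congr rfl fun k _ => by simp [Fin.ext_iff]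
  · rw [dif_neg h]
    exact Finset.sum_eq_zero fun k _ => if_neg (by omega)

lemma jordan_mul_entry {n : ℕ} (μ : ℂ) (M : Matrix (Fin n) (Fin n) ℂ) (i j : Fin n) :
    (jordanBlock μ n * M) i j =
      μ * M i j + (if h : (i : ℕ) + 1 < n then M ⟨(i : ℕ) + 1, h⟩ j else 0) := by
  rw [Matrix.mul_apply]
  have step : ∀ k : Fin n, jordanBlock μ n i k * M k j =
      (if (k : ℕ) = (i : ℕ) then μ * M k j else 0) +
      (if (k : ℕ) = (i : ℕ) + 1 then M k j else 0) := by
    intro k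
    rw [jordanBlock]
    simp only [Matrix.of_apply]
    by_cases h1 : (k : ℕ) = (i : ℕ)
    · rw [if_pos h1, if_pos h1, if_neg (by omega), add_zero]
    · rw [if_neg h1, if_neg h1, zero_add]
      by_cases h2 : (k : ℕ) = (i : ℕ) + 1
      · rw [if_pos h2, if_pos h2, one_mul]
      · rw [if_neg h2, if_neg h2, zero_mul]
  rw [Finset.sum_congr rfl fun k _ => step k, Finset.sum_add_distrib,
    sum_indicator, sum_indicator, dif_pos i.isLt]

lemma mul_jordan_entry {n : ℕ} (μ : ℂ) (M : Matrix (Fin n) (Fin n) ℂ) (i j : Fin n) :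
    (M * jordanBlock μ n) i j =
      M i j * μ + (if h : 1 ≤ (j : ℕ) then M i ⟨(j : ℕ) - 1, by omega⟩ else 0) := by
  rw [Matrix.mul_apply]
  by_cases hj : 1 ≤ (j : ℕ)
  · rw [dif_pos hj]
    have step : ∀ k : Fin n, M i k * jordanBlock μ n k j =
        (if (k : ℕ) = (j : ℕ) then M i k * μ else 0) +
        (if (k : ℕ) = (j : ℕ) - 1 then M i k else 0) := by
      intro k
      rw [jordanBlock]
      simp only [Matrix.of_apply]
      by_cases h1 : (j : ℕ) = (k : ℕ)
      · rw [if_pos h1, if_pos h1.symm, if_neg (show ¬((k:ℕ) = (j:ℕ) - 1) by omega), add_zero]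
      · by_cases h2 : (j : ℕ) = (k : ℕ) + 1
        · rw [if_neg h1, if_pos h2, if_neg (show ¬((k:ℕ) = (j:ℕ)) by omega),
            if_pos (show (k:ℕ) = (j:ℕ) - 1 by omega), mul_one, zero_add]
        · rw [if_neg h1, if_neg h2, if_neg (show ¬((k:ℕ) = (j:ℕ)) by omega),
            if_neg (show ¬((k:ℕ) = (j:ℕ) - 1) by omega), mul_zero, add_zero]
    rw [Finset.sum_congr rfl fun k _ => step k, Finset.sum_add_distrib,
      sum_indicator, sum_indicator, dif_pos j.isLt, dif_pos (show (j:ℕ) - 1 < n by omega)]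
  · rw [dif_neg hj, add_zero]
    have hj0 : (j : ℕ) = 0 := by omega
    have step : ∀ k : Fin n, M i k * jordanBlock μ n k j =
        (if (k : ℕ) = (j : ℕ) then M i k * μ else 0) := by
      intro k
      rw [jordanBlock]
      simp only [Matrix.of_apply]
      by_cases h1 : (j : ℕ) = (k : ℕ)
      · rw [if_pos h1, if_pos h1.symm]
      · rw [if_neg h1, if_neg (show ¬((j:ℕ) = (k:ℕ) + 1) by omega),
          if_neg (show ¬((k:ℕ) = (j:ℕ)) by omega), mul_zero]
    rw [Finset.sum_congr rfl fun k _ => step k, sum_indicator, dif_pos j.isLt]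

lemma part_d_key {n : ℕ} (hn : 1 ≤ n) (lam : ℂ) (hlam : lam ≠ 0) (x : Fin n → ℂ) :
    jordanBlock lam n * ((toep x * Omega lam n) * jordanBlock lam⁻¹ n) =
      toep x * Omega lam n := by
  have hneg2 : lam ^ (-2 : ℤ) = (lam * lam)⁻¹ := by
    rw [show (-2 : ℤ) = -(((2:ℕ) : ℤ)) by norm_num, zpow_neg, zpow_natCast]; ring_nf
  set g := toep x * Omega lam n with hg
  ext i j
  rw [jordan_mul_entry]
  by_cases hi : (i : ℕ) + 1 < n
  · rw [dif_pos hi, mul_jordan_entry, mul_jordan_entry]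
    by_cases hj : 1 ≤ (j : ℕ)
    · rw [dif_pos hj, dif_pos hj]
      by_cases hij : (i : ℕ) ≤ (j : ℕ) - 1
      · have hc : g i ⟨(j : ℕ) - 1, by omega⟩ =
            -(lam ^ (-2 : ℤ)) * g ⟨(i : ℕ) + 1, hi⟩ ⟨(j : ℕ) - 1 + 1, by omega⟩
              - lam⁻¹ * g ⟨(i : ℕ) + 1, hi⟩ ⟨(j : ℕ) - 1, by omega⟩ :=
          part_c (by omega) lam x hlam (i : ℕ) ((j : ℕ) - 1) hij (by omega)
        have hjj : (⟨(j : ℕ) - 1 + 1, by omega⟩ : Fin n) = j := Fin.ext (by simp; omega)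
        rw [hjj] at hc
        rw [hc, hneg2, mul_inv]
        have hll : lam * lam⁻¹ = 1 := mul_inv_cancel₀ hlam
        linear_combination (g i j - lam⁻¹ * g ⟨(i : ℕ) + 1, hi⟩ j
          - g ⟨(i : ℕ) + 1, hi⟩ ⟨(j : ℕ) - 1, by omega⟩) * hll
      · have h1 : g i ⟨(j : ℕ) - 1, by omega⟩ = 0 := part_a lam x _ _ (by simp; omega)
        have h2 : g ⟨(i : ℕ) + 1, hi⟩ ⟨(j : ℕ) - 1, by omega⟩ = 0 :=
          part_a lam x _ _ (by simp; omega)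
        have h3 : g ⟨(i : ℕ) + 1, hi⟩ j = 0 := part_a lam x _ _ (by simp; omega)
        rw [h1, h2, h3]
        field_simp
        ring
    · rw [dif_neg hj, dif_neg hj]
      have h3 : g ⟨(i : ℕ) + 1, hi⟩ j = 0 := part_a lam x _ _ (by simp; omega)
      rw [h3]
      field_simp
      ring
  · rw [dif_neg hi, mul_jordan_entry, add_zero]
    by_cases hj : 1 ≤ (j : ℕ)
    · rw [dif_pos hj]
      have h1 : g i ⟨(j : ℕ) - 1, by omega⟩ = 0 := part_a lam x _ _ (by simp; omega)
      rw [h1]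
      field_simp
      ring
    · rw [dif_neg hj, add_zero]
      field_simp

lemma jordan_det {n : ℕ} (lam : ℂ) : (jordanBlock lam n).det = lam ^ n := by
  have ht : (jordanBlock lam n).BlockTriangular id := by
    intro i j h
    have h' : (j : ℕ) < (i : ℕ) := h
    rw [jordanBlock]
    simp only [Matrix.of_apply]
    rw [if_neg (by omega), if_neg (by omega)]
  rw [Matrix.det_of_upperTriangular ht]
  have hd : ∀ i : Fin n, jordanBlock lam n i i = lam := fun i => by
    rw [jordanBlock]; simp
  simp [hd, Finset.prod_const]

theorem toep_mul_omega_props {n : ℕ} (hn : 1 ≤ n) (lam : ℂ) (hlam : lam ≠ 0)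
    (x : Fin n → ℂ) (hx : x ⟨0, hn⟩ ≠ 0)
    (g : Matrix (Fin n) (Fin n) ℂ) (hg : g = toep x * Omega lam n) :
    (∀ i j : Fin n, (j : ℕ) < (i : ℕ) → g i j = 0) ∧
    (∀ i : Fin n, g i ⟨n - 1, by omega⟩ = x ⟨n - 1 - (i : ℕ), by omega⟩) ∧
    (∀ i j : ℕ, ∀ hij : i ≤ j, ∀ hj : j < n - 1,
      g ⟨i, by omega⟩ ⟨j, by omega⟩ =
        -(lam ^ (-2 : ℤ)) * g ⟨i + 1, by omega⟩ ⟨j + 1, by omega⟩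
          - lam⁻¹ * g ⟨i + 1, by omega⟩ ⟨j, by omega⟩) ∧
    g * jordanBlock lam⁻¹ n = (jordanBlock lam n)⁻¹ * g  := by
  subst hg
  refine ⟨part_a lam x, fun i => part_b lam x i hn,
    fun i j hij hj => part_c hn lam x hlam i j hij hj, ?_⟩
  have hdet : IsUnit (jordanBlock lam n).det := by
    rw [jordan_det]; exact isUnit_iff_ne_zero.mpr (pow_ne_zero _ hlam)
  calc (toep x * Omega lam n) * jordanBlock lam⁻¹ n
      = (jordanBlock lam n)⁻¹ * jordanBlock lam n *
          ((toep x * Omega lam n) * jordanBlock lam⁻¹ n) := by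
        rw [Matrix.nonsing_inv_mul _ hdet, Matrix.one_mul]
    _ = (jordanBlock lam n)⁻¹ * (toep x * Omega lam n) := by
        rw [Matrix.mul_assoc, part_d_key hn lam hlam x]
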